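/- Every stability hyperplane of V_{g,n} is of the form H(i,S,d) := {φ ∈ V_{g,n} : d − φ(Γ(i,S))(v1) + 1/2 = 0} for some admissible pair (i,S) and some integer d. -/

import Mathlib

namespace ThetaPaper

def AdjOn {V E : Type} (ends : E → Sym2 V) (S : Set V) (a b : V) : Prop :=
  a ∈ S ∧ b ∈ S ∧ ∃ e, ends e = s(a, b)

def ConnectedOn {V E : Type} (ends : E → Sym2 V) (S : Set V) : Prop :=
  S.Nonempty ∧ ∀ a ∈ S, ∀ b ∈ S, Relation.ReflTransGen (AdjOn ends S) a b

def GraphConnected {V E : Type} (ends : E → Sym2 V) : Prop :=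
  ConnectedOn ends Set.univ

def Elementary {V E : Type} (ends : E → Sym2 V) (S : Set V) : Prop :=
  S.Nonempty ∧ Sᶜ.Nonempty ∧ ConnectedOn ends S ∧ ConnectedOn ends Sᶜ

noncomputable def cut {V E : Type} (ends : E → Sym2 V) (S : Set V) : ℕ :=
  Nat.card {e : E // ∃ a b, ends e = s(a, b) ∧ a ∈ S ∧ b ∉ S}

noncomputable def ell {V E : Type} (ends : E → Sym2 V) (S : Set V) (d : ℤ) (φ : V → ℝ) : ℝ :=
  (d : ℝ) - (∑ᶠ v ∈ S, φ v) + (cut ends S : ℝ) / 2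

def Nondegenerate {V E : Type} (ends : E → Sym2 V) (φ : V → ℝ) : Prop :=
  ∀ S : Set V, Elementary ends S → ∀ d : ℤ, ell ends S d φ ≠ 0

def RankZero {V E : Type} [Fintype V] (ends : E → Sym2 V) : Prop :=
  GraphConnected (fun e : {e : E // ¬ (ends e).IsDiag} => ends e.1) ∧
  Nat.card {e : E // ¬ (ends e).IsDiag} + 1 = Fintype.card V

/-- An `n`-marked graph (of would-be genus `g`): a multigraph with vertex set
`Fin nv`, edge set `Fin ne`, a genus function and a marking function. -/
structure MarkedGraph (g n : ℕ) where
  nv : ℕ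
  ne : ℕ
  ends : Fin ne → Sym2 (Fin nv)
  genus : Fin nv → ℕ
  mark : Fin n → Fin nv

/-- The valence of a vertex: the number of edge-ends at `v` (loops counted twice). -/
noncomputable def val {V E : Type} (ends : E → Sym2 V) (v : V) : ℕ :=
  Nat.card {e : E // ends e = s(v, v)} + Nat.card {e : E // v ∈ ends e}

/-- The graph is a stable `n`-marked graph of genus `g`. -/
def IsStable {g n : ℕ} (Γ : MarkedGraph g n) : Prop :=
  GraphConnected Γ.ends ∧
  (∑ v, Γ.genus v) + Γ.ne + 1 = g + Γ.nv ∧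
  ∀ v, Γ.genus v = 0 → 3 ≤ val Γ.ends v + Nat.card {j : Fin n // Γ.mark j = v}

/-- Stable and of loop-free circuit rank 0. -/
def Good {g n : ℕ} (Γ : MarkedGraph g n) : Prop :=
  IsStable Γ ∧ RankZero Γ.ends

/-- The type of stable `n`-marked genus-`g` graphs of loop-free circuit rank 0. -/
def GoodGraph (g n : ℕ) := {Γ : MarkedGraph g n // Good Γ}

/-- `c` is (the vertex map of) a contraction from `Γ1` to `Γ2`: there is a set `F` of
contracted edges, each lying inside a fiber of `c`, the fibers of `c` are connected by
the edges of `F`, the non-contracted edges correspond bijectively to the edges of `Γ2`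
with matching endpoints, genera add up (plus the circuit rank of the contracted piece),
and markings are transported. -/
def IsContraction {g n : ℕ} (Γ1 Γ2 : MarkedGraph g n) (c : Fin Γ1.nv → Fin Γ2.nv) : Prop :=
  (∀ j, Γ2.mark j = c (Γ1.mark j)) ∧
  ∃ (F : Set (Fin Γ1.ne)) (eE : {e : Fin Γ1.ne // e ∉ F} ≃ Fin Γ2.ne),
    (∀ e : {e : Fin Γ1.ne // e ∉ F}, Γ2.ends (eE e) = Sym2.map c (Γ1.ends e.1)) ∧
    (∀ e ∈ F, ∃ w, ∀ v ∈ Γ1.ends e, c v = w) ∧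
    (∀ w, ConnectedOn (fun e : F => Γ1.ends e.1) {v | c v = w}) ∧
    (∀ w, Γ2.genus w + Nat.card {v // c v = w} =
      (∑ v ∈ Finset.univ.filter (fun v => c v = w), Γ1.genus v) +
      Nat.card {e : Fin Γ1.ne // e ∈ F ∧ ∀ v ∈ Γ1.ends e, c v = w} + 1)

/-- The stability space `V_{g,n}`: tuples `φ(Γ)`, indexed by the stable `n`-marked
genus-`g` graphs of loop-free circuit rank 0, each summing to `g−1` and compatible
with all contractions. -/
def VgnSet (g n : ℕ) : Set (∀ Γ : GoodGraph g n, Fin Γ.1.nv → ℝ) :=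
  {φ | (∀ Γ, ∑ v, φ Γ v = (g : ℝ) - 1) ∧
    ∀ (Γ1 Γ2 : GoodGraph g n) (c : Fin Γ1.1.nv → Fin Γ2.1.nv),
      IsContraction Γ1.1 Γ2.1 c →
      ∀ w, φ Γ2 w = ∑ v ∈ Finset.univ.filter (fun v => c v = w), φ Γ1 v}

/-- An admissible pair `(i, S)`: `i ∈ {0,…,g}`, `S ⊆ {1,…,n}` contains the first
marking, `#S ≥ 2` if `i = 0` and `#S ≤ n−2` if `i = g`. -/
structure AdmissiblePair (g n : ℕ) [NeZero n] where
  i : ℕ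
  S : Finset (Fin n)
  hi : i ≤ g
  h1 : (0 : Fin n) ∈ S
  h0 : i = 0 → 2 ≤ S.card
  hg : i = g → S.card + 2 ≤ n

/-- The two-vertex one-edge stable marked graph `Γ(i,S)`: vertex `0` (= `v1`) of
genus `i` carrying the markings in `S`, vertex `1` (= `v2`) of genus `g−i` carrying
the remaining markings. -/
def GammaIS {g n : ℕ} [NeZero n] (p : AdmissiblePair g n) : MarkedGraph g n where
  nv := 2
  ne := 1
  ends := fun _ => s((0 : Fin 2), (1 : Fin 2))
  genus := ![p.i, g - p.i]
  mark := fun j => if j ∈ p.S then 0 else 1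

/-- The locus of nondegenerate elements of `V_{g,n}`. -/
def VgnOmega (g n : ℕ) : Set (∀ Γ : GoodGraph g n, Fin Γ.1.nv → ℝ) :=
  {φ | φ ∈ VgnSet g n ∧ ∀ Γ : GoodGraph g n, Nondegenerate Γ.1.ends (φ Γ)}

/-- `P` is a stability polytope of `V_{g,n}`: a connected component of the complement
in `V_{g,n}` of the union of all its stability hyperplanes. -/
def IsVgnPolytope (g n : ℕ) (P : Set (∀ Γ : GoodGraph g n, Fin Γ.1.nv → ℝ)) : Prop :=
  ∃ φ0 ∈ VgnOmega g n, P = connectedComponentIn (VgnOmega g n) φ0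

/-! ### Auxiliary lemmas -/

section Aux
variable {V E : Type}

lemma sym2_rep (z : Sym2 V) : ∃ a b, z = s(a, b) := by
  induction z using Sym2.ind with
  | _ a b => exact ⟨a, b, rfl⟩

lemma inside_iff {S : Set V} {a b : V} :
    (∀ v ∈ (s(a, b) : Sym2 V), v ∈ S) ↔ a ∈ S ∧ b ∈ S := by
  simp [Sym2.mem_iff]

lemma cross_iff {S : Set V} {a b : V} :
    (∃ x y, (s(a, b) : Sym2 V) = s(x, y) ∧ x ∈ S ∧ y ∉ S) ↔
      (a ∈ S ∧ b ∉ S) ∨ (b ∈ S ∧ a ∉ S) := by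
  constructor
  · rintro ⟨x, y, h, hx, hy⟩
    rw [Sym2.eq_iff] at h
    rcases h with ⟨rfl, rfl⟩ | ⟨rfl, rfl⟩
    · exact Or.inl ⟨hx, hy⟩
    · exact Or.inr ⟨hx, hy⟩
  · rintro (⟨h1, h2⟩ | ⟨h1, h2⟩)
    · exact ⟨a, b, rfl, h1, h2⟩
    · exact ⟨b, a, Sym2.eq_swap, h1, h2⟩

lemma loopin_iff {S : Set V} {a b : V} :
    (∃ v ∈ S, (s(a, b) : Sym2 V) = s(v, v)) ↔ a = b ∧ a ∈ S := by
  constructor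
  · rintro ⟨v, hv, h⟩
    rw [Sym2.eq_iff] at h
    rcases h with ⟨rfl, rfl⟩ | ⟨rfl, rfl⟩ <;> exact ⟨rfl, hv⟩
  · rintro ⟨rfl, h⟩
    exact ⟨a, h, rfl⟩

lemma crossing_of_reflTransGen {R : V → V → Prop} {S : Set V} {a b : V}
    (h : Relation.ReflTransGen R a b) (ha : a ∈ S) (hb : b ∉ S) :
    ∃ x y, R x y ∧ x ∈ S ∧ y ∉ S := by
  induction h with
  | refl => exact absurd ha hb
  | @tail c d h1 h2 ih =>
    by_cases hc : c ∈ S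
    · exact ⟨c, d, h2, hc, hb⟩
    · exact ih hc

def stepN (R : V → V → Prop) : ℕ → V → V → Prop
  | 0, a, b => a = b
  | n + 1, a, b => ∃ c, stepN R n a c ∧ R c b

lemma reflTransGen_iff_stepN {R : V → V → Prop} {a b : V} :
    Relation.ReflTransGen R a b ↔ ∃ n, stepN R n a b := by
  constructor
  · intro h
    induction h with
    | refl => exact ⟨0, rfl⟩
    | @tail c d h1 h2 ih =>
      obtain ⟨n, hn⟩ := ih
      exact ⟨n + 1, c, hn, h2⟩
  · rintro ⟨n, hn⟩
    induction n generalizing b with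
    | zero => exact hn ▸ Relation.ReflTransGen.refl
    | succ n ih =>
      obtain ⟨c, h1, h2⟩ := hn
      exact (ih h1).tail h2

open Finset Classical in
lemma natCard_filter [Fintype E] (P : E → Prop) :
    Nat.card {e : E // P e} = (Finset.univ.filter P).card := by
  classical
  simp [Nat.card_eq_fintype_card, Fintype.card_subtype]

open Finset Classical in
lemma natcard_add_natcard_not [Fintype E] (P : E → Prop) :
    Nat.card {e : E // P e} + Nat.card {e : E // ¬ P e} = Fintype.card E := by
  classical
  rw [Nat.card_eq_fintype_card, Nat.card_eq_fintype_card, Fintype.card_subtype_compl]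
  have := Fintype.card_subtype_le P
  omega

lemma connectedOn_card_le [Fintype V] [Fintype E] (ends : E → Sym2 V) (A : Set V)
    (hA : ConnectedOn ends A) :
    Nat.card A ≤ Nat.card {e : E // ¬ (ends e).IsDiag ∧ ∀ v ∈ ends e, v ∈ A} + 1 := by
  classical
  obtain ⟨⟨r, hr⟩, hconn⟩ := hA
  have hex : ∀ v ∈ A, ∃ m, stepN (AdjOn ends A) m r v := fun v hv =>
    reflTransGen_iff_stepN.1 (hconn r hr v hv)
  set d : V → ℕ := fun v => if hv : v ∈ A then Nat.find (hex v hv) else 0 with hd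
  have key : ∀ v, v ∈ A → v ≠ r →
      ∃ e u, (¬ (ends e).IsDiag ∧ ∀ x ∈ ends e, x ∈ A) ∧ ends e = s(u, v) ∧ d u < d v := by
    intro v hv hvr
    have hdv : d v = Nat.find (hex v hv) := by simp [hd, hv]
    have hspec : stepN (AdjOn ends A) (d v) r v := hdv ▸ Nat.find_spec (hex v hv)
    have hdv0 : d v ≠ 0 := by
      intro h0
      rw [h0] at hspec
      exact hvr hspec.symm
    obtain ⟨m, hm⟩ : ∃ m, d v = m + 1 := ⟨d v - 1, by omega⟩
    rw [hm] at hspec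
    obtain ⟨c, hc1, hc2⟩ := hspec
    obtain ⟨hcA, hvA, e, he⟩ := hc2
    have hdc : d c ≤ m := by
      have : Nat.find (hex c hcA) ≤ m := Nat.find_le hc1
      simpa [hd, hcA] using this
    have hcv : c ≠ v := by
      intro h; rw [h] at hdc; omega
    refine ⟨e, c, ⟨?_, ?_⟩, he, by omega⟩
    · rw [he, Sym2.mk_isDiag_iff]; exact hcv
    · intro x hx
      rw [he, Sym2.mem_iff] at hx
      rcases hx with rfl | rfl <;> assumption
  let T := {v : V // v ∈ A ∧ v ≠ r}
  let f : T → {e : E // ¬ (ends e).IsDiag ∧ ∀ x ∈ ends e, x ∈ A} := fun v =>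
    ⟨Classical.choose (key v.1 v.2.1 v.2.2),
      (Classical.choose_spec (Classical.choose_spec (key v.1 v.2.1 v.2.2))).1⟩
  have hf : ∀ v : T, ∃ u, ends (f v).1 = s(u, v.1) ∧ d u < d v.1 := by
    intro v
    obtain ⟨u, hu⟩ := Classical.choose_spec (key v.1 v.2.1 v.2.2)
    exact ⟨u, hu.2.1, hu.2.2⟩
  have hinj : Function.Injective f := by
    intro v w hvw
    obtain ⟨u, hu1, hu2⟩ := hf v
    obtain ⟨u', hu1', hu2'⟩ := hf w
    rw [hvw] at hu1
    rw [hu1] at hu1'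
    rw [Sym2.eq_iff] at hu1'
    rcases hu1' with ⟨h1, h2⟩ | ⟨h1, h2⟩
    · exact Subtype.ext h2
    · subst h1; subst h2; omega
  have hcard : Nat.card T ≤ Nat.card {e : E // ¬ (ends e).IsDiag ∧ ∀ x ∈ ends e, x ∈ A} :=
    Nat.card_le_card_of_injective f hinj
  have hT : Nat.card T + 1 = Nat.card A := by
    have e2 : Nat.card T = Nat.card ↥(A \ {r}) :=
      Nat.card_congr (Equiv.subtypeEquivRight (fun v => by
        simp [Set.mem_diff]))
    have e1 : Nat.card ↥(A \ {r}) + 1 = Nat.card A := by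
      rw [Nat.card_coe_set_eq, Nat.card_coe_set_eq]
      exact Set.ncard_diff_singleton_add_one hr (Set.toFinite A)
    omega
  omega

lemma edge_partition [Fintype V] [Fintype E] (ends : E → Sym2 V) (S : Set V) :
    Nat.card {e : E // ¬ (ends e).IsDiag} =
      Nat.card {e : E // ¬ (ends e).IsDiag ∧ ∀ v ∈ ends e, v ∈ S} +
      Nat.card {e : E // ¬ (ends e).IsDiag ∧ ∀ v ∈ ends e, v ∈ Sᶜ} +
      Nat.card {e : E // ∃ a b, ends e = s(a, b) ∧ a ∈ S ∧ b ∉ S} := by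
  classical
  rw [natCard_filter, natCard_filter, natCard_filter, natCard_filter]
  simp only [Finset.card_filter]
  rw [← Finset.sum_add_distrib, ← Finset.sum_add_distrib]
  refine Finset.sum_congr rfl fun e _ => ?_
  obtain ⟨a, b, hab⟩ := sym2_rep (ends e)
  simp only [hab, Sym2.mk_isDiag_iff, inside_iff, cross_iff]
  by_cases hd : a = b <;> by_cases ha : a ∈ S <;> by_cases hb : b ∈ S <;>
    simp_all [Set.mem_compl_iff]

lemma loops_partition [Fintype V] [Fintype E] (ends : E → Sym2 V) (S : Set V) :
    Nat.card {e : E // (ends e).IsDiag} =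
      Nat.card {e : E // ∃ v ∈ S, ends e = s(v, v)} +
      Nat.card {e : E // ∃ v ∈ Sᶜ, ends e = s(v, v)} := by
  classical
  rw [natCard_filter, natCard_filter, natCard_filter]
  simp only [Finset.card_filter]
  rw [← Finset.sum_add_distrib]
  refine Finset.sum_congr rfl fun e _ => ?_
  obtain ⟨a, b, hab⟩ := sym2_rep (ends e)
  simp only [hab, Sym2.mk_isDiag_iff, loopin_iff]
  by_cases hd : a = b <;> by_cases ha : a ∈ S <;>
    simp_all [Set.mem_compl_iff]

lemma inside_partition [Fintype V] [Fintype E] (ends : E → Sym2 V) (A : Set V) :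
    Nat.card {e : E // ∀ v ∈ ends e, v ∈ A} =
      Nat.card {e : E // ¬ (ends e).IsDiag ∧ ∀ v ∈ ends e, v ∈ A} +
      Nat.card {e : E // ∃ v ∈ A, ends e = s(v, v)} := by
  classical
  rw [natCard_filter, natCard_filter, natCard_filter]
  simp only [Finset.card_filter]
  rw [← Finset.sum_add_distrib]
  refine Finset.sum_congr rfl fun e _ => ?_
  obtain ⟨a, b, hab⟩ := sym2_rep (ends e)
  simp only [hab, Sym2.mk_isDiag_iff, inside_iff, loopin_iff]
  by_cases hd : a = b <;> by_cases ha : a ∈ A <;> by_cases hb : b ∈ A <;>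
    simp_all [Set.mem_compl_iff]

lemma cross_symm [Fintype V] [Fintype E] (ends : E → Sym2 V) (A : Set V) :
    Nat.card {e : E // ∃ a b, ends e = s(a, b) ∧ a ∈ Aᶜ ∧ b ∉ Aᶜ} =
      Nat.card {e : E // ∃ a b, ends e = s(a, b) ∧ a ∈ A ∧ b ∉ A} := by
  refine Nat.card_congr (Equiv.subtypeEquivRight fun e => ?_)
  constructor
  · rintro ⟨a, b, h, ha, hb⟩
    exact ⟨b, a, h.trans Sym2.eq_swap, by simpa using hb, by simpa using ha⟩
  · rintro ⟨a, b, h, ha, hb⟩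
    exact ⟨b, a, h.trans Sym2.eq_swap, by simpa using hb, by simpa using ha⟩

lemma card_set_add_card_compl [Fintype V] (S : Set V) :
    Nat.card S + Nat.card ↥(Sᶜ) = Fintype.card V := by
  rw [Nat.card_coe_set_eq, Nat.card_coe_set_eq, Set.ncard_add_ncard_compl]
  exact Nat.card_eq_fintype_card

lemma counts_of_elementary [Fintype V] [Fintype E] (ends : E → Sym2 V)
    (hconn : GraphConnected ends)
    (htree : Nat.card {e : E // ¬ (ends e).IsDiag} + 1 = Fintype.card V)
    (S : Set V) (hS : Elementary ends S) :
    Nat.card {e : E // ∃ a b, ends e = s(a, b) ∧ a ∈ S ∧ b ∉ S} = 1 ∧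
    Nat.card {e : E // ¬ (ends e).IsDiag ∧ ∀ v ∈ ends e, v ∈ S} + 1 = Nat.card S ∧
    Nat.card {e : E // ¬ (ends e).IsDiag ∧ ∀ v ∈ ends e, v ∈ Sᶜ} + 1 = Nat.card ↥(Sᶜ) := by
  obtain ⟨hSne, hScne, hconnS, hconnSc⟩ := hS
  have h1 := connectedOn_card_le ends S hconnS
  have h2 := connectedOn_card_le ends Sᶜ hconnSc
  have h3 := edge_partition ends S
  have h4 := card_set_add_card_compl S
  have h5 : 1 ≤ Nat.card {e : E // ∃ a b, ends e = s(a, b) ∧ a ∈ S ∧ b ∉ S} := by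
    obtain ⟨a, haS⟩ := hSne
    obtain ⟨b, hbS⟩ := hScne
    have hr : Relation.ReflTransGen (AdjOn ends Set.univ) a b :=
      hconn.2 a (Set.mem_univ a) b (Set.mem_univ b)
    obtain ⟨x, y, ⟨-, -, e, he⟩, hx, hy⟩ := crossing_of_reflTransGen hr haS hbS
    haveI : Nonempty {e : E // ∃ a b, ends e = s(a, b) ∧ a ∈ S ∧ b ∉ S} :=
      ⟨⟨e, x, y, he, hx, hy⟩⟩
    exact Nat.one_le_iff_ne_zero.2 (Nat.card_ne_zero.2 ⟨this, Subtype.finite⟩)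
  have h6 : 1 ≤ Nat.card S := by
    obtain ⟨a, ha⟩ := hSne
    haveI : Nonempty S := ⟨⟨a, ha⟩⟩
    exact Nat.one_le_iff_ne_zero.2 (Nat.card_ne_zero.2 ⟨this, Subtype.finite⟩)
  have h7 : 1 ≤ Nat.card ↥(Sᶜ) := by
    obtain ⟨a, ha⟩ := hScne
    haveI : Nonempty ↥(Sᶜ) := ⟨⟨a, ha⟩⟩
    exact Nat.one_le_iff_ne_zero.2 (Nat.card_ne_zero.2 ⟨this, Subtype.finite⟩)
  omega

open Finset Classical in
lemma marks_bound [Fintype V] [Fintype E] {n : ℕ} (ends : E → Sym2 V) (genus : V → ℕ)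
    (mark : Fin n → V) (A : Set V)
    (hstab : ∀ v, genus v = 0 → 3 ≤ val ends v + Nat.card {j : Fin n // mark j = v})
    (hgenus : ∀ v ∈ A, genus v = 0)
    (hloops : Nat.card {e : E // ∃ v ∈ A, ends e = s(v, v)} = 0)
    (hinside : Nat.card {e : E // ¬ (ends e).IsDiag ∧ ∀ v ∈ ends e, v ∈ A} + 1 = Nat.card A)
    (hcross : Nat.card {e : E // ∃ a b, ends e = s(a, b) ∧ a ∈ A ∧ b ∉ A} = 1) :
    Nat.card A + 1 ≤ Nat.card {j : Fin n // mark j ∈ A} := by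
  classical
  set Af := Finset.univ.filter (· ∈ A) with hAf
  have hAfmem : ∀ v, v ∈ Af ↔ v ∈ A := by intro v; simp [hAf]
  have hAcard : Af.card = Nat.card A := (natCard_filter _).symm
  have hnl : ∀ (e : E) (v : V), v ∈ A → ends e ≠ s(v, v) := by
    intro e v hv he
    haveI : Nonempty {e : E // ∃ v ∈ A, ends e = s(v, v)} := ⟨⟨e, v, hv, he⟩⟩
    have := Nat.card_ne_zero.2 ⟨this, Subtype.finite⟩
    omega
  have hmarks : ∑ v ∈ Af, Nat.card {j : Fin n // mark j = v}
      = Nat.card {j : Fin n // mark j ∈ A} := by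
    rw [natCard_filter]
    rw [Finset.card_eq_sum_card_fiberwise (f := mark) (t := Af)
      (fun j hj => by simp only [Finset.mem_coe, hAfmem] at hj ⊢; exact (Finset.mem_filter.1 hj).2)]
    refine Finset.sum_congr rfl fun v hv => ?_
    rw [natCard_filter]
    congr 1
    ext j
    constructor
    · intro hj
      have h := (Finset.mem_filter.1 hj).2
      refine Finset.mem_filter.2 ⟨Finset.mem_filter.2 ⟨Finset.mem_univ j, ?_⟩, h⟩
      rw [h]
      exact (hAfmem v).1 hv
    · intro hj
      exact Finset.mem_filter.2 ⟨Finset.mem_univ j, (Finset.mem_filter.1 hj).2⟩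
  have hval : ∑ v ∈ Af, val ends v ≤ 2 * (Nat.card A - 1) + 1 := by
    have hv0 : ∀ v ∈ Af, val ends v = (Finset.univ.filter (fun e => v ∈ ends e)).card := by
      intro v hv
      rw [val]
      have hz : Nat.card {e : E // ends e = s(v, v)} = 0 := by
        rw [Nat.card_eq_zero]
        exact Or.inl ⟨fun ⟨e, he⟩ => hnl e v ((hAfmem v).1 hv) he⟩
      rw [hz, natCard_filter, zero_add]
      exact congrArg Finset.card (by convert rfl)
    rw [Finset.sum_congr rfl hv0]
    have hswap : ∑ v ∈ Af, (Finset.univ.filter (fun e => v ∈ ends e)).card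
        = ∑ e : E, (Af.filter (fun v => v ∈ ends e)).card := by
      simp only [Finset.card_filter]
      exact Finset.sum_comm
    rw [hswap]
    have hbound : ∀ e : E, (Af.filter (fun v => v ∈ ends e)).card ≤
        (if ¬ (ends e).IsDiag ∧ ∀ v ∈ ends e, v ∈ A then 2 else 0) +
        (if ∃ a b, ends e = s(a, b) ∧ a ∈ A ∧ b ∉ A then 1 else 0) := by
      intro e
      obtain ⟨a, b, hab⟩ := sym2_rep (ends e)
      by_cases ha : a ∈ A <;> by_cases hb : b ∈ A
      · have hne : a ≠ b := by
          intro h; subst h; exact hnl e a ha hab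
        have h1 : ¬ (ends e).IsDiag ∧ ∀ v ∈ ends e, v ∈ A := by
          constructor
          · rw [hab, Sym2.mk_isDiag_iff]; exact hne
          · intro v hv; rw [hab, Sym2.mem_iff] at hv
            rcases hv with rfl | rfl <;> assumption
        rw [if_pos h1]
        have hsub : Af.filter (fun v => v ∈ ends e) ⊆ {a, b} := by
          intro x hx
          simp only [Finset.mem_filter, hab, Sym2.mem_iff] at hx
          simp only [Finset.mem_insert, Finset.mem_singleton]
          exact hx.2
        calc (Af.filter (fun v => v ∈ ends e)).card ≤ ({a, b} : Finset V).card :=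
              Finset.card_le_card hsub
          _ ≤ 2 := Finset.card_insert_le a {b} |>.trans (by simp)
          _ ≤ 2 + _ := Nat.le_add_right _ _
      · have h2 : ∃ x y, ends e = s(x, y) ∧ x ∈ A ∧ y ∉ A := ⟨a, b, hab, ha, hb⟩
        rw [if_pos h2]
        have hsub : Af.filter (fun v => v ∈ ends e) ⊆ {a} := by
          intro x hx
          simp only [Finset.mem_filter, hAfmem, hab, Sym2.mem_iff] at hx
          simp only [Finset.mem_singleton]
          rcases hx.2 with rfl | rfl
          · rfl
          · exact absurd hx.1 hb
        calc (Af.filter (fun v => v ∈ ends e)).card ≤ ({a} : Finset V).card :=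
              Finset.card_le_card hsub
          _ = 1 := Finset.card_singleton a
          _ ≤ _ + 1 := Nat.le_add_left _ _
      · have h2 : ∃ x y, ends e = s(x, y) ∧ x ∈ A ∧ y ∉ A :=
          ⟨b, a, hab.trans Sym2.eq_swap, hb, ha⟩
        rw [if_pos h2]
        have hsub : Af.filter (fun v => v ∈ ends e) ⊆ {b} := by
          intro x hx
          simp only [Finset.mem_filter, hAfmem, hab, Sym2.mem_iff] at hx
          simp only [Finset.mem_singleton]
          rcases hx.2 with rfl | rfl
          · exact absurd hx.1 ha
          · rfl
        calc (Af.filter (fun v => v ∈ ends e)).card ≤ ({b} : Finset V).card :=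
              Finset.card_le_card hsub
          _ = 1 := Finset.card_singleton b
          _ ≤ _ + 1 := Nat.le_add_left _ _
      · have hsub : Af.filter (fun v => v ∈ ends e) = ∅ := by
          ext x
          simp only [Finset.mem_filter, hAfmem, hab, Sym2.mem_iff, Finset.notMem_empty,
            iff_false, not_and]
          intro hx h
          rcases h with rfl | rfl <;> [exact ha hx; exact hb hx]
        rw [hsub]
        simp
    calc ∑ e : E, (Af.filter (fun v => v ∈ ends e)).card
        ≤ ∑ e : E, ((if ¬ (ends e).IsDiag ∧ ∀ v ∈ ends e, v ∈ A then 2 else 0) +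
          (if ∃ a b, ends e = s(a, b) ∧ a ∈ A ∧ b ∉ A then 1 else 0)) :=
          Finset.sum_le_sum fun e _ => hbound e
      _ = 2 * (Nat.card A - 1) + 1 := by
          rw [Finset.sum_add_distrib]
          have e1 : ∑ e : E, (if ¬ (ends e).IsDiag ∧ ∀ v ∈ ends e, v ∈ A then 2 else 0)
              = 2 * Nat.card {e : E // ¬ (ends e).IsDiag ∧ ∀ v ∈ ends e, v ∈ A} := by
            rw [natCard_filter, Finset.card_filter, Finset.mul_sum]
            refine Finset.sum_congr rfl fun e _ => ?_
            split_ifs <;> simp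
          have e2 : ∑ e : E, (if ∃ a b, ends e = s(a, b) ∧ a ∈ A ∧ b ∉ A then 1 else 0)
              = Nat.card {e : E // ∃ a b, ends e = s(a, b) ∧ a ∈ A ∧ b ∉ A} := by
            rw [natCard_filter, Finset.card_filter]
            exact Finset.sum_congr rfl fun e _ => by congr 1
          rw [e1, e2, hcross]
          omega
  have hstabsum : 3 * Af.card ≤ ∑ v ∈ Af, (val ends v + Nat.card {j : Fin n // mark j = v}) := by
    calc 3 * Af.card = ∑ _v ∈ Af, 3 := by rw [Finset.sum_const, smul_eq_mul, mul_comm]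
      _ ≤ _ := Finset.sum_le_sum fun v hv => hstab v (hgenus v ((hAfmem v).1 hv))
  rw [Finset.sum_add_distrib] at hstabsum
  omega

lemma fin2_cases (w : Fin 2) : w = 0 ∨ w = 1 := by fin_cases w <;> simp

lemma connectedOn_restrict [Fintype V] (ends : E → Sym2 V) (A : Set V) (F : Set E)
    (hF : ∀ e a b, ends e = s(a, b) → a ∈ A → b ∈ A → e ∈ F)
    (h : ConnectedOn ends A) :
    ConnectedOn (fun e : F => ends e.1) A := by
  refine ⟨h.1, fun a ha b hb => ?_⟩
  refine Relation.ReflTransGen.mono ?_ _ _ (h.2 a ha b hb)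
  rintro x y ⟨hx, hy, e, he⟩
  exact ⟨hx, hy, ⟨e, hF e x y he hx hy⟩, he⟩

end Aux

/-! ### The contraction construction -/

open Classical in
lemma construction (g n : ℕ) [NeZero n]
    (Γ : GoodGraph g n) (A : Set (Fin Γ.1.nv)) (hA : Elementary Γ.1.ends A)
    (hm : Γ.1.mark 0 ∈ A) :
    ∃ (p : AdmissiblePair g n) (c : Fin Γ.1.nv → Fin 2),
      IsContraction Γ.1 (GammaIS p) c ∧
      Finset.univ.filter (fun v => c v = (0 : Fin 2)) = Finset.univ.filter (· ∈ A) := by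
  classical
  obtain ⟨⟨hconn, hsum, hstab⟩, hrz⟩ := Γ.2
  obtain ⟨hcut, hinA, hinAc⟩ := counts_of_elementary Γ.1.ends hconn hrz.2 A hA
  -- abbreviations for the counts
  set LA := Nat.card {e : Fin Γ.1.ne // ∃ v ∈ A, Γ.1.ends e = s(v, v)} with hLA
  set LAc := Nat.card {e : Fin Γ.1.ne // ∃ v ∈ Aᶜ, Γ.1.ends e = s(v, v)} with hLAc
  set nlA := Nat.card {e : Fin Γ.1.ne // ¬ (Γ.1.ends e).IsDiag ∧ ∀ v ∈ Γ.1.ends e, v ∈ A} with hnlA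
  set nlAc := Nat.card {e : Fin Γ.1.ne // ¬ (Γ.1.ends e).IsDiag ∧ ∀ v ∈ Γ.1.ends e, v ∈ Aᶜ} with hnlAc
  set gA := ∑ v ∈ Finset.univ.filter (· ∈ A), Γ.1.genus v with hgA
  set gAc := ∑ v ∈ Finset.univ.filter (fun v => v ∉ A), Γ.1.genus v with hgAc
  set cA := Nat.card A with hcA
  set cAc := Nat.card ↥(Aᶜ) with hcAc
  have hloopsplit := loops_partition Γ.1.ends A
  have hedgesplit := edge_partition Γ.1.ends A
  have hedgetot : Nat.card {e : Fin Γ.1.ne // ¬ (Γ.1.ends e).IsDiag}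
      + Nat.card {e : Fin Γ.1.ne // (Γ.1.ends e).IsDiag} = Γ.1.ne := by
    have := natcard_add_natcard_not (fun e : Fin Γ.1.ne => (Γ.1.ends e).IsDiag)
    simp only [Fintype.card_fin] at this
    omega
  have htree : Nat.card {e : Fin Γ.1.ne // ¬ (Γ.1.ends e).IsDiag} + 1 = Γ.1.nv := by
    have := hrz.2
    simpa using this
  have hgenustot : gA + gAc = ∑ v, Γ.1.genus v := by
    rw [hgA, hgAc]
    exact Finset.sum_filter_add_sum_filter_not _ _ _
  have hvtot : cA + cAc = Γ.1.nv := by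
    have := card_set_add_card_compl A
    rw [Fintype.card_fin] at this
    exact this
  have hsum' : (∑ v, Γ.1.genus v) + Γ.1.ne + 1 = g + Γ.1.nv := hsum
  set i := gA + LA with hi_def
  set j := gAc + LAc with hj_def
  have hij : i + j = g := by omega
  have hcA1 : 1 ≤ cA := by omega
  have hcAc1 : 1 ≤ cAc := by omega
  -- the marking set
  set pS : Finset (Fin n) := Finset.univ.filter (fun j => Γ.1.mark j ∈ A) with hpS
  have hpScard : Nat.card {j : Fin n // Γ.1.mark j ∈ A} = pS.card := natCard_filter _
  have hmarktot : pS.card + Nat.card {j : Fin n // Γ.1.mark j ∈ Aᶜ} = n := by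
    have := natcard_add_natcard_not (fun j : Fin n => Γ.1.mark j ∈ A)
    simp only [Fintype.card_fin] at this
    have he : Nat.card {j : Fin n // Γ.1.mark j ∈ Aᶜ} = Nat.card {j : Fin n // ¬ Γ.1.mark j ∈ A} :=
      Nat.card_congr (Equiv.subtypeEquivRight fun j => Iff.rfl)
    omega
  have hgenusA : ∀ v ∈ A, i = 0 → Γ.1.genus v = 0 := by
    intro v hv hi0
    have : gA = 0 := by omega
    rw [hgA] at this
    exact Finset.sum_eq_zero_iff.1 this v (by simp [hv])
  have hgenusAc : ∀ v ∈ Aᶜ, j = 0 → Γ.1.genus v = 0 := by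
    intro v hv hj0
    have : gAc = 0 := by omega
    rw [hgAc] at this
    exact Finset.sum_eq_zero_iff.1 this v (by simp; exact hv)
  have h0 : i = 0 → 2 ≤ pS.card := by
    intro hi0
    have hb := marks_bound Γ.1.ends Γ.1.genus Γ.1.mark A hstab
      (fun v hv => hgenusA v hv hi0) (by omega) hinA hcut
    omega
  have hgc : i = g → pS.card + 2 ≤ n := by
    intro hig
    have hj0 : j = 0 := by omega
    have hcutc : Nat.card {e : Fin Γ.1.ne // ∃ a b, Γ.1.ends e = s(a, b) ∧ a ∈ Aᶜ ∧ b ∉ Aᶜ} = 1 := by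
      rw [cross_symm]
      exact hcut
    have hb := marks_bound Γ.1.ends Γ.1.genus Γ.1.mark Aᶜ hstab
      (fun v hv => hgenusAc v hv hj0) (by omega) hinAc hcutc
    omega
  have hi_le : i ≤ g := by omega
  have h1 : (0 : Fin n) ∈ pS := by
    rw [hpS]
    exact Finset.mem_filter.2 ⟨Finset.mem_univ _, hm⟩
  set p : AdmissiblePair g n := ⟨i, pS, hi_le, h1, h0, hgc⟩ with hp
  set c : Fin Γ.1.nv → Fin 2 := fun v => if v ∈ A then 0 else 1 with hc
  have hc0 : ∀ v, c v = 0 ↔ v ∈ A := by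
    intro v
    by_cases hv : v ∈ A <;> simp [hc, hv]
  have hc1 : ∀ v, c v = 1 ↔ v ∉ A := by
    intro v
    by_cases hv : v ∈ A <;> simp [hc, hv]
  have hfib0 : Finset.univ.filter (fun v => c v = (0 : Fin 2)) = Finset.univ.filter (· ∈ A) := by
    ext v
    simp only [Finset.mem_filter, Finset.mem_univ, true_and]
    exact hc0 v
  have hfib1 : Finset.univ.filter (fun v => c v = (1 : Fin 2))
      = Finset.univ.filter (fun v => v ∉ A) := by
    ext v
    simp only [Finset.mem_filter, Finset.mem_univ, true_and]
    exact hc1 v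
  refine ⟨p, c, ⟨?_, ?_⟩, hfib0⟩
  · -- markings
    intro jm
    show (if jm ∈ pS then (0 : Fin 2) else 1) = c (Γ.1.mark jm)
    by_cases hjm : jm ∈ pS
    · have hjA : Γ.1.mark jm ∈ A := (Finset.mem_filter.1 hjm).2
      rw [if_pos hjm, hc]
      simp [hjA]
    · have hjA : Γ.1.mark jm ∉ A := fun h => hjm (Finset.mem_filter.2 ⟨Finset.mem_univ jm, h⟩)
      rw [if_neg hjm, hc]
      simp [hjA]
  · -- the contraction data
    set F : Set (Fin Γ.1.ne) := {e | ¬ ∃ a b, Γ.1.ends e = s(a, b) ∧ a ∈ A ∧ b ∉ A} with hF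
    have hnotF : ∀ e : Fin Γ.1.ne, e ∉ F ↔ ∃ a b, Γ.1.ends e = s(a, b) ∧ a ∈ A ∧ b ∉ A := by
      intro e
      simp [hF]
    haveI : Fintype {e : Fin Γ.1.ne // e ∉ F} := Fintype.ofFinite _
    have hcard1 : Fintype.card {e : Fin Γ.1.ne // e ∉ F} = 1 := by
      rw [← Nat.card_eq_fintype_card]
      rw [Nat.card_congr (Equiv.subtypeEquivRight hnotF)]
      exact hcut
    refine ⟨F, Fintype.equivFinOfCardEq hcard1, ?_, ?_, ?_, ?_⟩
    · -- Γ.1.ends of the surviving edge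
      intro e
      show s((0 : Fin 2), (1 : Fin 2)) = Sym2.map c (Γ.1.ends e.1)
      obtain ⟨a, b, hab, ha, hb⟩ := (hnotF e.1).1 e.2
      rw [hab, Sym2.map_pair_eq, hc]
      simp [ha, hb]
    · -- contracted edges lie in fibers
      intro e he
      obtain ⟨a, b, hab⟩ := sym2_rep (Γ.1.ends e)
      by_cases ha : a ∈ A
      · have hb : b ∈ A := by
          by_contra hb
          exact (hnotF e).2 ⟨a, b, hab, ha, hb⟩ he
        refine ⟨(0 : Fin 2), fun v hv => ?_⟩
        rw [hab, Sym2.mem_iff] at hv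
        rcases hv with rfl | rfl <;> [exact (hc0 v).2 ha; exact (hc0 v).2 hb]
      · have hb : b ∉ A := by
          intro hb
          exact (hnotF e).2 ⟨b, a, hab.trans Sym2.eq_swap, hb, ha⟩ he
        refine ⟨(1 : Fin 2), fun v hv => ?_⟩
        rw [hab, Sym2.mem_iff] at hv
        rcases hv with rfl | rfl <;> [exact (hc1 v).2 ha; exact (hc1 v).2 hb]
    · -- fibers are connected
      intro w
      have hFin : ∀ (e : Fin Γ.1.ne) (a b : Fin Γ.1.nv),
          Γ.1.ends e = s(a, b) → a ∈ A → b ∈ A → e ∈ F := by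
        intro e a b hab ha hb
        rw [hF]
        intro hcr
        rcases cross_iff.1 (hab ▸ hcr) with ⟨_, h⟩ | ⟨_, h⟩ <;> [exact h hb; exact h ha]
      have hFin' : ∀ (e : Fin Γ.1.ne) (a b : Fin Γ.1.nv),
          Γ.1.ends e = s(a, b) → a ∈ Aᶜ → b ∈ Aᶜ → e ∈ F := by
        intro e a b hab ha hb
        rw [hF]
        intro hcr
        rcases cross_iff.1 (hab ▸ hcr) with ⟨h, _⟩ | ⟨h, _⟩ <;> [exact ha h; exact hb h]
      rcases fin2_cases w with rfl | rfl
      · have hset : {v | c v = (0 : Fin 2)} = A := by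
          ext v
          exact hc0 v
        erw [hset]
        exact connectedOn_restrict Γ.1.ends A F hFin hA.2.2.1
      · have hset : {v | c v = (1 : Fin 2)} = Aᶜ := by
          ext v
          exact hc1 v
        erw [hset]
        exact connectedOn_restrict Γ.1.ends Aᶜ F hFin' hA.2.2.2
    · -- Γ.1.genus condition
      intro w
      have hinside : ∀ (B : Set (Fin Γ.1.nv)) (w : Fin 2), (∀ v, c v = w ↔ v ∈ B) →
          Nat.card {e : Fin Γ.1.ne // e ∈ F ∧ ∀ v ∈ Γ.1.ends e, c v = w}
            = Nat.card {e : Fin Γ.1.ne // ∀ v ∈ Γ.1.ends e, v ∈ B} := by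
        intro B w hw
        refine Nat.card_congr (Equiv.subtypeEquivRight fun e => ?_)
        constructor
        · rintro ⟨-, h⟩ v hv
          exact (hw v).1 (h v hv)
        · intro h
          obtain ⟨a, b, hab⟩ := sym2_rep (Γ.1.ends e)
          have ha : a ∈ B := h a (by rw [hab]; exact Sym2.mem_mk_left a b)
          have hb : b ∈ B := h b (by rw [hab]; exact Sym2.mem_mk_right a b)
          constructor
          · -- e ∈ F
            rw [hF]
            intro hcr
            obtain ⟨x, y, hxy, hx, hy⟩ := hcr
            -- both endpoints are in B, and c is constant w on B; but x ∈ A, y ∉ A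
            -- so c x ≠ c y; yet c x = w = c y
            have hx' : c x = w := (hw x).2 (h x (by rw [hxy]; exact Sym2.mem_mk_left x y))
            have hy' : c y = w := (hw y).2 (h y (by rw [hxy]; exact Sym2.mem_mk_right x y))
            have : c x = 0 := (hc0 x).2 hx
            have hy1 : c y = 1 := (hc1 y).2 hy
            rw [hx'] at this
            rw [hy'] at hy1
            rw [this] at hy1
            exact absurd hy1 (by decide)
          · intro v hv
            exact (hw v).2 (h v hv)
      rcases fin2_cases w with rfl | rfl
      · -- w = 0
        have hg0 : (GammaIS p).genus ((0 : Fin 2)) = i := by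
          show (![p.i, g - p.i] : Fin 2 → ℕ) 0 = i
          simp [hp]
        have hv0 : Nat.card {v : Fin Γ.1.nv // c v = 0} = cA :=
          Nat.card_congr (Equiv.subtypeEquivRight hc0)
        have hs0 : ∑ v ∈ Finset.univ.filter (fun v => c v = (0 : Fin 2)), Γ.1.genus v = gA := by
          rw [hfib0, hgA]
        have he0 : Nat.card {e : Fin Γ.1.ne // e ∈ F ∧ ∀ v ∈ Γ.1.ends e, c v = (0 : Fin 2)}
            = nlA + LA := by
          rw [hinside A 0 hc0, inside_partition Γ.1.ends A]
        erw [hg0, hv0, hs0, he0]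
        omega
      · -- w = 1
        have hg1 : (GammaIS p).genus ((1 : Fin 2)) = g - i := by
          show (![p.i, g - p.i] : Fin 2 → ℕ) 1 = g - i
          simp [hp]
        have hv1 : Nat.card {v : Fin Γ.1.nv // c v = 1} = cAc :=
          Nat.card_congr (Equiv.subtypeEquivRight hc1)
        have hs1 : ∑ v ∈ Finset.univ.filter (fun v => c v = (1 : Fin 2)), Γ.1.genus v = gAc := by
          rw [hfib1, hgAc]
        have he1 : Nat.card {e : Fin Γ.1.ne // e ∈ F ∧ ∀ v ∈ Γ.1.ends e, c v = (1 : Fin 2)}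
            = nlAc + LAc := by
          rw [hinside Aᶜ 1 hc1, inside_partition Γ.1.ends Aᶜ]
        erw [hg1, hv1, hs1, he1]
        omega

/-- Every stability hyperplane of `V_{g,n}` — i.e. a set of the form
`{φ ∈ V_{g,n} : ℓ(S,d)(φ(Γ)) = 0}` for a stable marked graph `Γ` of loop-free circuit
rank 0, an elementary `S` and `d ∈ ℤ` — is of the form
`H(i,S,d) = {φ ∈ V_{g,n} : d − φ(Γ(i,S))(v1) + 1/2 = 0}` for some admissible pair
`(i,S)` and integer `d`. -/
theorem statement11 (g n : ℕ) [NeZero n] (hg0 : g = 0 → 3 ≤ n)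
    (hgood : ∀ p : AdmissiblePair g n, Good (GammaIS p))
    (Γ : GoodGraph g n) (S : Set (Fin Γ.1.nv)) (hS : Elementary Γ.1.ends S) (d : ℤ) :
    ∃ (p : AdmissiblePair g n) (d' : ℤ),
      {φ ∈ VgnSet g n | ell Γ.1.ends S d (φ Γ) = 0} =
        {φ ∈ VgnSet g n |
          (d' : ℝ) - φ ⟨GammaIS p, hgood p⟩ ((0 : Fin 2)) + 1 / 2 = 0} := by
  classical
  have hcutS : cut Γ.1.ends S = 1 :=
    (counts_of_elementary Γ.1.ends Γ.2.1.1 Γ.2.2.2 S hS).1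
  have hfinsum : ∀ φ : (∀ Γ : GoodGraph g n, Fin Γ.1.nv → ℝ),
      (∑ᶠ v ∈ S, φ Γ v) = ∑ v ∈ Finset.univ.filter (· ∈ S), φ Γ v := by
    intro φ
    rw [← finsum_mem_coe_finset]
    congr 1
    ext v
    simp
  by_cases hm : Γ.1.mark 0 ∈ S
  · obtain ⟨p, c, hcontr, hfib⟩ := construction g n Γ S hS hm
    refine ⟨p, d, ?_⟩
    ext φ
    simp only [Set.mem_setOf_eq]
    refine and_congr_right fun hφ => ?_
    have hcomp := hφ.2 Γ ⟨GammaIS p, hgood p⟩ c hcontr ((0 : Fin 2))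
    erw [hfib] at hcomp
    rw [ell, hcutS, hfinsum φ, ← hcomp]
    norm_num
  · have hm' : Γ.1.mark 0 ∈ Sᶜ := hm
    have hSc : Elementary Γ.1.ends Sᶜ := by
      refine ⟨hS.2.1, ?_, hS.2.2.2, ?_⟩
      · rw [compl_compl]; exact hS.1
      · rw [compl_compl]; exact hS.2.2.1
    obtain ⟨p, c, hcontr, hfib⟩ := construction g n Γ Sᶜ hSc hm'
    refine ⟨p, (g : ℤ) - 2 - d, ?_⟩
    ext φ
    simp only [Set.mem_setOf_eq]
    refine and_congr_right fun hφ => ?_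
    have hcomp := hφ.2 Γ ⟨GammaIS p, hgood p⟩ c hcontr ((0 : Fin 2))
    erw [hfib] at hcomp
    have hsplit : (∑ v ∈ Finset.univ.filter (· ∈ S), φ Γ v)
        + φ ⟨GammaIS p, hgood p⟩ ((0 : Fin 2)) = (g : ℝ) - 1 := by
      rw [hcomp, ← hφ.1 Γ,
        ← Finset.sum_filter_add_sum_filter_not Finset.univ (· ∈ S) (φ Γ)]
      refine congrArg _ (Finset.sum_congr ?_ (fun _ _ => rfl))
      ext v
      simp [Set.mem_compl_iff]
    rw [ell, hcutS, hfinsum φ]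
    constructor <;> intro h <;> push_cast at h ⊢ <;> linarith [hsplit]

end ThetaPaper
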